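/- Let c⁻, c⁺ > 0 and θ ∈ [0,1]. Let A be the 4×4 real matrix with rows R₁ = (1, θ/c⁺, θ²/(2(c⁺)²), θ³/(6(c⁺)³)), R₂ = (0, 1, θ/c⁺, θ²/(2(c⁺)²)), R₃ = (1, (θ−1)/c⁻, (θ−1)²/(2(c⁻)²), (θ−1)³/(6(c⁻)³)), R₄ = (0, 1, (θ−1)/c⁻, (θ−1)²/(2(c⁻)²)). Then det A = (c⁻·θ + c⁺·(1−θ))⁴ / (12·(c⁺·c⁻)⁴), and in particular det A > 0 for all θ ∈ [0,1]. -/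

import Mathlib

/-- The coefficient matrix of the linear system determining the immersed interface
cubic polynomial, for left/right wave speeds `cm = c⁻`, `cp = c⁺` and relative
interface location `θ = (x_j − α)/Δx`. -/
noncomputable def iimMatrix (cm cp θ : ℝ) : Matrix (Fin 4) (Fin 4) ℝ :=
  !![1, θ/cp, θ^2/(2*cp^2), θ^3/(6*cp^3);
     0, 1, θ/cp, θ^2/(2*cp^2);
     1, (θ-1)/cm, (θ-1)^2/(2*cm^2), (θ-1)^3/(6*cm^3);
     0, 1, (θ-1)/cm, (θ-1)^2/(2*cm^2)]

/-- `det A = (c⁻θ + c⁺(1−θ))⁴ / (12 (c⁺c⁻)⁴)`, which is positive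
for `θ ∈ [0,1]` and `c⁻, c⁺ > 0`. -/
theorem stmt_14 (cm cp θ : ℝ) (hcm : 0 < cm) (hcp : 0 < cp)
    (hθ : θ ∈ Set.Icc (0:ℝ) 1) :
    (iimMatrix cm cp θ).det = (cm * θ + cp * (1 - θ))^4 / (12 * (cp * cm)^4) ∧
    0 < (iimMatrix cm cp θ).det := by
  obtain ⟨h0, h1⟩ := hθ
  have hnum : 0 < cm * θ + cp * (1 - θ) := by
    rcases eq_or_lt_of_le h0 with h | h
    · simp [← h]; linarith
    · have : 0 < cm * θ := mul_pos hcm h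
      nlinarith
  have hdet : (iimMatrix cm cp θ).det
      = (cm * θ + cp * (1 - θ))^4 / (12 * (cp * cm)^4) := by
    rw [iimMatrix]
    simp [Matrix.det_succ_row_zero, Fin.sum_univ_succ, Matrix.submatrix, Fin.succAbove, Fin.castSucc, Fin.castAdd, Fin.castLE]
    field_simp
    ring
  refine ⟨hdet, hdet ▸ div_pos (by positivity) (by positivity)⟩
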